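/- The pairing ⟨Z(α₁,...,α_n), X_{β₁}⋯X_{β_m}⟩ = δ_{m,n} ∏_i δ_{α_i,β_i} between the quasi-shuffle bialgebra QSym_M on words in nonzero elements of M and the free algebra NC_M on generators X_α (with Δ(X_γ) = ∑_{α+β=γ} X_α ⊗ X_β) satisfies ⟨a ⊗ b, Δ(v)⟩ = ⟨ab, v⟩ for all a, b ∈ QSym_M and v ∈ NC_M. -/

import Mathlib

set_option linter.unusedSectionVars false

namespace QSym

class AddZeroFree (M : Type) [AddCommMonoid M] : Prop where
  add_ne : ∀ a b : M, a ≠ 0 → b ≠ 0 → a + b ≠ 0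

variable {M : Type} [AddCommMonoid M] [AddZeroFree M]

/-- A word in the nonzero elements of `M`: a basis element `Z(α₁,…,α_k)` of `QSym_M`. -/
abbrev Word (M : Type) [AddCommMonoid M] := List {a : M // a ≠ 0}

/-- `QSym_M`: the span of the words `Z(α₁,…,α_k)`. -/
abbrev QS (M : Type) [AddCommMonoid M] := Word M →₀ ℚ

/-- The quasi-shuffle product on basis words. -/
noncomputable def qsh : Word M → Word M → QS M
  | [], w => Finsupp.single w 1
  | v@(_ :: _), [] => Finsupp.single v 1
  | a :: as, b :: bs =>
      Finsupp.mapDomain (a :: ·) (qsh as (b :: bs))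
        + Finsupp.mapDomain (b :: ·) (qsh (a :: as) bs)
        + Finsupp.mapDomain
            ((⟨a.1 + b.1, AddZeroFree.add_ne a.1 b.1 a.2 b.2⟩ : {x : M // x ≠ 0}) :: ·)
            (qsh as bs)
  termination_by v w => v.length + w.length

/-- The quasi-shuffle product, extended bilinearly. -/
noncomputable def qmul (f g : QS M) : QS M :=
  Finsupp.sum f fun v c => Finsupp.sum g fun w d => (c * d) • qsh v w

/-- `NC_M`: the free associative `ℚ`-algebra on generators `X_α`, `α ∈ M`, `α ≠ 0`,
realized as the monoid algebra of the free monoid, so that the monomials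
`X_{β₁}⋯X_{β_m}` are the words in the `β_i`. -/
abbrev NCF (M : Type) [AddCommMonoid M] :=
  MonoidAlgebra ℚ (FreeMonoid {a : M // a ≠ 0})

open Classical in
/-- The generator `X_α` of `NC_M` (with `X_0 = 1`). -/
noncomputable def Xel (α : M) : NCF M :=
  if h : α = 0 then 1 else MonoidAlgebra.single (FreeMonoid.of ⟨α, h⟩) 1

/-- The pairing `⟨Z(α₁,…,α_n), X_{β₁}⋯X_{β_m}⟩ = δ_{m,n} ∏ δ_{α_i,β_i}`,
extended bilinearly. -/
noncomputable def pairing (a : QS M) (v : NCF M) : ℚ :=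
  Finsupp.sum a fun w c => c * v.coeff (FreeMonoid.ofList w)

/-- The pairing with `a`, as a linear functional on `NC_M`. -/
noncomputable def pairL (a : QS M) : NCF M →ₗ[ℚ] ℚ :=
  (Finsupp.lsum ℚ fun w => a (FreeMonoid.toList w) • (LinearMap.id : ℚ →ₗ[ℚ] ℚ))
    ∘ₗ (MonoidAlgebra.coeffLinearEquiv ℚ).toLinearMap

/-- The pairing of `a ⊗ b` against `NC_M ⊗ NC_M`, `⟨a⊗b, v⊗w⟩ = ⟨a,v⟩⟨b,w⟩`. -/
noncomputable def pairT (a b : QS M) :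
    TensorProduct ℚ (NCF M) (NCF M) →ₗ[ℚ] ℚ :=
  TensorProduct.lift ((pairL a).smulRight (pairL b))

variable (S : Type) [DecidableEq S]

instance : AddZeroFree (S →₀ ℕ) where
  add_ne a b ha _ h := by
    apply ha
    ext s
    have hs := DFunLike.congr_fun h s
    simp only [Finsupp.add_apply, Finsupp.coe_zero, Pi.zero_apply] at hs ⊢
    omega

/-- The coproduct on `NC_M` for `M = ℕ^{⊕S}`: the algebra homomorphism with
`Δ(X_γ) = ∑_{α+β=γ} X_α ⊗ X_β`. -/
noncomputable def DeltaNCF :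
    NCF (S →₀ ℕ) →ₐ[ℚ] TensorProduct ℚ (NCF (S →₀ ℕ)) (NCF (S →₀ ℕ)) :=
  MonoidAlgebra.lift ℚ _ (FreeMonoid {a : S →₀ ℕ // a ≠ 0})
    (FreeMonoid.lift fun a : {a : S →₀ ℕ // a ≠ 0} =>
      ∑ p ∈ Finset.HasAntidiagonal.antidiagonal a.1, Xel p.1 ⊗ₜ[ℚ] Xel p.2)



/-! ### Auxiliary lemmas -/

lemma pairL_apply (a : QS M) (x : NCF M) :
    pairL a x = x.coeff.sum fun w c => (a (FreeMonoid.toList w) • (LinearMap.id : ℚ →ₗ[ℚ] ℚ)) c := by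
  rw [pairL, LinearMap.comp_apply]
  erw [Finsupp.lsum_apply]
  rfl

lemma pairL_single (u : Word M) (x : NCF M) :
    pairL (Finsupp.single u (1 : ℚ)) x = x.coeff (FreeMonoid.ofList u) := by
  classical
  rw [pairL_apply]
  rw [Finsupp.sum]
  simp only [LinearMap.smul_apply, LinearMap.id_coe, id_eq]
  have h1 : ∀ w ∈ x.coeff.support,
      (Finsupp.single u (1:ℚ)) (FreeMonoid.toList w) • x.coeff w
        = if FreeMonoid.ofList u = w then x.coeff w else 0 := by
    intro w _
    rw [Finsupp.single_apply]
    by_cases h : FreeMonoid.ofList u = w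
    · rw [if_pos h, if_pos, one_smul]
      rw [← h, FreeMonoid.toList_ofList]
    · rw [if_neg h, if_neg, zero_smul]
      intro h'
      exact h (by rw [h', FreeMonoid.ofList_toList])
  rw [Finset.sum_congr rfl h1, Finset.sum_ite_eq]
  by_cases h : FreeMonoid.ofList u ∈ x.coeff.support
  · rw [if_pos h]
  · rw [if_neg h, eq_comm]
    exact Finsupp.notMem_support_iff.mp h

lemma pairL_zero (x : NCF M) : pairL (0 : QS M) x = 0 := by
  rw [pairL_apply]
  rw [Finsupp.sum]
  simp

lemma pairL_add (a b : QS M) (x : NCF M) :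
    pairL (a + b) x = pairL a x + pairL b x := by
  rw [pairL_apply, pairL_apply, pairL_apply]
  rw [Finsupp.sum, Finsupp.sum, Finsupp.sum, ← Finset.sum_add_distrib]
  apply Finset.sum_congr rfl
  intro w _
  simp only [LinearMap.smul_apply, LinearMap.id_coe, id_eq, Finsupp.add_apply]
  rw [add_smul]

lemma pairL_smul (c : ℚ) (a : QS M) (x : NCF M) :
    pairL (c • a) x = c * pairL a x := by
  rw [pairL_apply, pairL_apply]
  rw [Finsupp.sum, Finsupp.sum, Finset.mul_sum]
  apply Finset.sum_congr rfl
  intro w _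
  simp only [LinearMap.smul_apply, LinearMap.id_coe, id_eq, Finsupp.smul_apply]
  rw [smul_eq_mul, smul_eq_mul, smul_eq_mul, mul_assoc]

lemma pairT_tmul (a b : QS M) (x y : NCF M) :
    pairT a b (x ⊗ₜ[ℚ] y) = pairL a x * pairL b y := by
  rw [pairT, TensorProduct.lift.tmul]
  simp

lemma pairT_zero_left (b : QS M) (T : TensorProduct ℚ (NCF M) (NCF M)) :
    pairT (0 : QS M) b T = 0 := by
  induction T using TensorProduct.induction_on with
  | zero => simp
  | tmul x y => rw [pairT_tmul, pairL_zero, zero_mul]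
  | add x y hx hy => rw [map_add, hx, hy, add_zero]

lemma pairT_zero_right (a : QS M) (T : TensorProduct ℚ (NCF M) (NCF M)) :
    pairT a (0 : QS M) T = 0 := by
  induction T using TensorProduct.induction_on with
  | zero => simp
  | tmul x y => rw [pairT_tmul, pairL_zero, mul_zero]
  | add x y hx hy => rw [map_add, hx, hy, add_zero]

lemma pairT_add_left (a a' b : QS M) (T : TensorProduct ℚ (NCF M) (NCF M)) :
    pairT (a + a') b T = pairT a b T + pairT a' b T := by
  induction T using TensorProduct.induction_on with
  | zero => simp
  | tmul x y => rw [pairT_tmul, pairT_tmul, pairT_tmul, pairL_add, add_mul]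
  | add x y hx hy => rw [map_add, map_add, map_add, hx, hy]; ring

lemma pairT_add_right (a b b' : QS M) (T : TensorProduct ℚ (NCF M) (NCF M)) :
    pairT a (b + b') T = pairT a b T + pairT a b' T := by
  induction T using TensorProduct.induction_on with
  | zero => simp
  | tmul x y => rw [pairT_tmul, pairT_tmul, pairT_tmul, pairL_add, mul_add]
  | add x y hx hy => rw [map_add, map_add, map_add, hx, hy]; ring

lemma pairT_smul_left (c : ℚ) (a b : QS M) (T : TensorProduct ℚ (NCF M) (NCF M)) :
    pairT (c • a) b T = c * pairT a b T := by
  induction T using TensorProduct.induction_on with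
  | zero => simp
  | tmul x y => rw [pairT_tmul, pairT_tmul, pairL_smul, mul_assoc]
  | add x y hx hy => rw [map_add, map_add, hx, hy]; ring

lemma pairT_smul_right (c : ℚ) (a b : QS M) (T : TensorProduct ℚ (NCF M) (NCF M)) :
    pairT a (c • b) T = c * pairT a b T := by
  induction T using TensorProduct.induction_on with
  | zero => simp
  | tmul x y => rw [pairT_tmul, pairT_tmul, pairL_smul]; ring
  | add x y hx hy => rw [map_add, map_add, hx, hy]; ring

lemma single_of_mul (a : {x : M // x ≠ 0}) (f : NCF M) :
    (MonoidAlgebra.single (FreeMonoid.of a) (1 : ℚ) * f).coeff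
      = Finsupp.mapDomain (fun y => FreeMonoid.of a * y) f.coeff := by
  classical
  rw [MonoidAlgebra.mul_def, MonoidAlgebra.coeff_single, Finsupp.sum_single_index]
  · rw [Finsupp.mapDomain, MonoidAlgebra.coeff_finsuppSum]
    apply Finsupp.sum_congr
    intro y _
    rw [one_mul, MonoidAlgebra.coeff_single]
  · simp

lemma mapDomainNCF_nil_apply (a : {x : M // x ≠ 0}) (f : NCF M) :
    (Finsupp.mapDomain (fun y => FreeMonoid.of a * y) f.coeff)
        (FreeMonoid.ofList ([] : Word M)) = 0 := by
  rw [Finsupp.mapDomain_notin_range]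
  rintro ⟨y, hy⟩
  have h2 := congrArg FreeMonoid.toList hy
  simp only [FreeMonoid.toList_of_mul, FreeMonoid.toList_ofList] at h2
  exact List.cons_ne_nil _ _ h2

open Classical in
lemma mapDomainNCF_cons_apply (a : {x : M // x ≠ 0}) (f : NCF M) (c : {x : M // x ≠ 0})
    (t : Word M) :
    (Finsupp.mapDomain (fun y => FreeMonoid.of a * y) f.coeff) (FreeMonoid.ofList (c :: t))
      = if c = a then f.coeff (FreeMonoid.ofList t) else 0 := by
  have hinj : Function.Injective
      (fun y : FreeMonoid {x : M // x ≠ 0} => FreeMonoid.of a * y) :=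
    mul_right_injective (FreeMonoid.of a)
  by_cases h : c = a
  · subst h
    rw [if_pos rfl]
    have h0 : FreeMonoid.ofList (c :: t) = FreeMonoid.of c * FreeMonoid.ofList t := rfl
    rw [h0, Finsupp.mapDomain_apply hinj]
  · rw [if_neg h, Finsupp.mapDomain_notin_range]
    rintro ⟨y, hy⟩
    have h2 := congrArg FreeMonoid.toList hy
    simp only [FreeMonoid.toList_of_mul, FreeMonoid.toList_ofList] at h2
    injection h2 with h3 _
    exact h h3.symm

open Classical in
/-- Residual word after pairing off `p` at the front: `some u` if `p = 0`,
`some (tail u)` if `p` is the head of `u`, otherwise `none`. -/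
noncomputable def pk (u : Word M) (p : M) : Option (Word M) :=
  if p = 0 then some u else
    match u with
    | [] => none
    | c :: t => if c.1 = p then some t else none

/-- The corresponding element of `QS M`. -/
noncomputable def qres (u : Word M) (p : M) : QS M :=
  (pk u p).elim 0 (fun u' => Finsupp.single u' 1)

lemma pk_zero (u : Word M) : pk u 0 = some u := by
  rw [pk.eq_def]; simp

lemma pk_nil (p : M) (hp : p ≠ 0) : pk ([] : Word M) p = none := by
  rw [pk.eq_def]; simp [hp]

open Classical in
lemma pk_cons (c : {x : M // x ≠ 0}) (t : Word M) (p : M) (hp : p ≠ 0) :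
    pk (c :: t) p = if c.1 = p then some t else none := by
  rw [pk.eq_def]; simp only [if_neg hp]

lemma pairL_Xel_mul (u : Word M) (p : M) (x : NCF M) :
    pairL (Finsupp.single u (1:ℚ)) (Xel p * x) = pairL (qres u p) x := by
  classical
  by_cases hp : p = 0
  · subst hp
    rw [qres, pk_zero, Option.elim_some, Xel, dif_pos rfl, one_mul]
  · rw [Xel, dif_neg hp, pairL_single, single_of_mul]
    match u with
    | [] =>
      rw [mapDomainNCF_nil_apply, qres, pk_nil _ hp, Option.elim_none, pairL_zero]
    | c :: t =>
      rw [mapDomainNCF_cons_apply, qres, pk_cons _ _ _ hp]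
      by_cases h : c.1 = p
      · have hc : c = (⟨p, hp⟩ : {x : M // x ≠ 0}) := Subtype.ext h
        rw [if_pos hc, if_pos h, Option.elim_some, pairL_single]
      · have hc : c ≠ (⟨p, hp⟩ : {x : M // x ≠ 0}) := fun hh => h (congrArg Subtype.val hh)
        rw [if_neg hc, if_neg h, Option.elim_none, pairL_zero]

lemma pairT_Xel_mul (u w : Word M) (p q : M) (T : TensorProduct ℚ (NCF M) (NCF M)) :
    pairT (Finsupp.single u (1:ℚ)) (Finsupp.single w (1:ℚ)) ((Xel p ⊗ₜ[ℚ] Xel q) * T)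
      = pairT (qres u p) (qres w q) T := by
  induction T using TensorProduct.induction_on with
  | zero => rw [mul_zero, map_zero, map_zero]
  | tmul x y =>
    rw [Algebra.TensorProduct.tmul_mul_tmul, pairT_tmul, pairT_tmul,
      pairL_Xel_mul, pairL_Xel_mul]
  | add x y hx hy => rw [mul_add, map_add, map_add, hx, hy]

lemma mapDomain_nil_apply (c : {a : M // a ≠ 0}) (f : QS M) :
    (Finsupp.mapDomain (c :: ·) f) ([] : Word M) = 0 := by
  rw [Finsupp.mapDomain_notin_range]
  rintro ⟨y, hy⟩
  exact List.cons_ne_nil _ _ hy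

open Classical in
lemma mapDomain_cons_apply (c : {a : M // a ≠ 0}) (f : QS M) (d : {a : M // a ≠ 0})
    (t : Word M) :
    (Finsupp.mapDomain (c :: ·) f) (d :: t) = if c = d then f t else 0 := by
  by_cases h : c = d
  · subst h
    rw [if_pos rfl, Finsupp.mapDomain_apply (List.cons_injective)]
  · rw [if_neg h, Finsupp.mapDomain_notin_range]
    rintro ⟨y, hy⟩
    injection hy with h1 _
    exact h h1

lemma qsh_nil_right (u : Word M) : qsh u ([] : Word M) = Finsupp.single u 1 := by
  match u with
  | [] => simp only [qsh]
  | a :: as => simp only [qsh]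

open Classical in
lemma qsh_nil_apply (u w : Word M) :
    qsh u w ([] : Word M) = if u = [] ∧ w = [] then 1 else 0 := by
  match u, w with
  | [], [] => simp [qsh]
  | [], b :: bs => simp [qsh, Finsupp.single_apply]
  | a :: as, [] => simp [qsh, Finsupp.single_apply]
  | a :: as, b :: bs =>
    simp only [qsh, Finsupp.add_apply, mapDomain_nil_apply, add_zero]
    simp

lemma pairing_single_right (f : QS M) (s : Word M) :
    pairing f (MonoidAlgebra.single (FreeMonoid.ofList s) (1:ℚ)) = f s := by
  classical
  rw [pairing, Finsupp.sum]
  have h1 : ∀ w ∈ f.support,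
      f w * (MonoidAlgebra.single (FreeMonoid.ofList s) (1:ℚ)).coeff (FreeMonoid.ofList w)
        = if s = w then f w else 0 := by
    intro w _
    rw [MonoidAlgebra.single_apply]
    by_cases h : s = w
    · subst h; rw [if_pos rfl, if_pos rfl, mul_one]
    · rw [if_neg h, if_neg, mul_zero]
      intro h'
      exact h (FreeMonoid.ofList.injective h')
  rw [Finset.sum_congr rfl h1, Finset.sum_ite_eq]
  by_cases h : s ∈ f.support
  · rw [if_pos h]
  · rw [if_neg h, eq_comm]
    exact Finsupp.notMem_support_iff.mp h

lemma pairing_zero_right (a : QS M) : pairing a (0 : NCF M) = 0 := by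
  simp [pairing]

lemma pairing_add_right (a : QS M) (v v' : NCF M) :
    pairing a (v + v') = pairing a v + pairing a v' := by
  rw [pairing, pairing, pairing, Finsupp.sum, Finsupp.sum, Finsupp.sum,
    ← Finset.sum_add_distrib]
  apply Finset.sum_congr rfl
  intro w _
  rw [MonoidAlgebra.coeff_add, Finsupp.add_apply, mul_add]

lemma pairing_smul_right (c : ℚ) (a : QS M) (v : NCF M) :
    pairing a (c • v) = c * pairing a v := by
  rw [pairing, pairing, Finsupp.sum, Finsupp.sum, Finset.mul_sum]
  apply Finset.sum_congr rfl
  intro w _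
  rw [MonoidAlgebra.coeff_smul, Finsupp.smul_apply, smul_eq_mul]
  ring

lemma qmul_zero_left (b : QS M) : qmul (0 : QS M) b = 0 := by
  rw [qmul, Finsupp.sum_zero_index]

lemma qmul_zero_right (a : QS M) : qmul a (0 : QS M) = 0 := by
  simp only [qmul, Finsupp.sum_zero_index, Finsupp.sum, Finsupp.support_zero, Finset.sum_empty,
    Finset.sum_const_zero]

lemma qmul_add_left (a a' b : QS M) : qmul (a + a') b = qmul a b + qmul a' b := by
  rw [qmul, qmul, qmul]
  apply Finsupp.sum_add_index'
  · intro v; simp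
  · intro v c1 c2
    simp only [add_mul, add_smul]
    exact Finsupp.sum_add

lemma qmul_add_right (a b b' : QS M) : qmul a (b + b') = qmul a b + qmul a b' := by
  rw [qmul, qmul, qmul, ← Finsupp.sum_add]
  apply Finsupp.sum_congr
  intro v _
  exact Finsupp.sum_add_index' (fun w => by simp) (fun w d1 d2 => by rw [mul_add, add_smul])

lemma qmul_smul_left (r : ℚ) (a b : QS M) : qmul (r • a) b = r • qmul a b := by
  rw [qmul, qmul, Finsupp.smul_sum, Finsupp.sum_smul_index' (fun v => by simp)]
  apply Finsupp.sum_congr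
  intro v _
  rw [Finsupp.smul_sum]
  apply Finsupp.sum_congr
  intro w _
  rw [smul_eq_mul, smul_smul, mul_assoc]

lemma qmul_smul_right (r : ℚ) (a b : QS M) : qmul a (r • b) = r • qmul a b := by
  rw [qmul, qmul, Finsupp.smul_sum]
  apply Finsupp.sum_congr
  intro v _
  rw [Finsupp.smul_sum, Finsupp.sum_smul_index' (fun w => by simp)]
  apply Finsupp.sum_congr
  intro w _
  rw [smul_eq_mul, smul_smul, mul_left_comm]

lemma qmul_single_single (u w : Word M) (r t : ℚ) :
    qmul (Finsupp.single u r) (Finsupp.single w t) = (r * t) • qsh u w := by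
  rw [qmul, Finsupp.sum_single_index (by simp), Finsupp.sum_single_index (by simp)]

lemma sum_one {ι : Type*} [DecidableEq ι] (t : Finset ι) (G : ι → ℚ) (x₁ : ι)
    (h : ∀ x ∈ t, x ≠ x₁ → G x = 0) :
    ∑ x ∈ t, G x = (if x₁ ∈ t then G x₁ else 0) := by
  have key : ∀ x ∈ t, G x = (if x = x₁ then G x else 0) := by
    intro x hx
    by_cases h1 : x = x₁
    · rw [if_pos h1]
    · rw [if_neg h1, h x hx h1]
  rw [Finset.sum_congr rfl key, Finset.sum_ite_eq' t x₁ G]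

lemma sum_three {ι : Type*} [DecidableEq ι] (t : Finset ι) (G : ι → ℚ) (x₁ x₂ x₃ : ι)
    (h12 : x₁ ≠ x₂) (h13 : x₁ ≠ x₃) (h23 : x₂ ≠ x₃)
    (h : ∀ x ∈ t, x ≠ x₁ → x ≠ x₂ → x ≠ x₃ → G x = 0) :
    ∑ x ∈ t, G x = (if x₁ ∈ t then G x₁ else 0) + (if x₂ ∈ t then G x₂ else 0)
      + (if x₃ ∈ t then G x₃ else 0) := by
  have key : ∀ x ∈ t, G x = (if x = x₁ then G x else 0) + (if x = x₂ then G x else 0)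
      + (if x = x₃ then G x else 0) := by
    intro x hx
    by_cases h1 : x = x₁
    · subst h1; rw [if_pos rfl, if_neg h12, if_neg h13, add_zero, add_zero]
    by_cases h2 : x = x₂
    · subst h2; rw [if_neg (by exact fun hh => h12 hh.symm), if_pos rfl, if_neg h23,
        zero_add, add_zero]
    by_cases h3 : x = x₃
    · subst h3; rw [if_neg (by exact fun hh => h13 hh.symm),
        if_neg (by exact fun hh => h23 hh.symm), if_pos rfl, zero_add, zero_add]
    rw [if_neg h1, if_neg h2, if_neg h3, h x hx h1 h2 h3, add_zero, add_zero]
  rw [Finset.sum_congr rfl key, Finset.sum_add_distrib, Finset.sum_add_distrib,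
    Finset.sum_ite_eq' t x₁ G, Finset.sum_ite_eq' t x₂ G, Finset.sum_ite_eq' t x₃ G]

set_option maxHeartbeats 1000000 in
/-- The key combinatorial identity on basis elements. -/
lemma key_lemma : ∀ (s : Word (S →₀ ℕ)) (u w : Word (S →₀ ℕ)),
    pairT (Finsupp.single u (1:ℚ)) (Finsupp.single w (1:ℚ))
      (DeltaNCF S (MonoidAlgebra.single (FreeMonoid.ofList s) (1:ℚ)))
      = qsh u w s := by
  classical
  intro s
  induction s with
  | nil =>
    intro u w
    have hv : ∀ u : Word (S →₀ ℕ),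
        (1 : NCF (S →₀ ℕ)).coeff (FreeMonoid.ofList u) = if u = [] then (1:ℚ) else 0 := by
      intro u
      rw [MonoidAlgebra.one_def, MonoidAlgebra.single_apply]
      match u with
      | [] =>
        rw [if_pos rfl,
          if_pos (show (1 : FreeMonoid {a : S →₀ ℕ // a ≠ 0}) = FreeMonoid.ofList [] from rfl)]
      | c :: t =>
        rw [if_neg (List.cons_ne_nil c t), if_neg]
        intro h
        have h2 := congrArg FreeMonoid.toList h
        rw [FreeMonoid.toList_one, FreeMonoid.toList_ofList] at h2
        exact List.cons_ne_nil c t h2.symm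
    have h0 : (MonoidAlgebra.single (FreeMonoid.ofList ([] : Word (S →₀ ℕ))) (1:ℚ)
        : NCF (S →₀ ℕ)) = 1 := rfl
    rw [h0, map_one, Algebra.TensorProduct.one_def, pairT_tmul, pairL_single, pairL_single,
      qsh_nil_apply, hv, hv]
    by_cases hu : u = [] <;> by_cases hw : w = [] <;> simp [hu, hw]
  | cons β s' ih =>
    intro u w
    have hsplit : (MonoidAlgebra.single (FreeMonoid.ofList (β :: s')) (1:ℚ)
          : NCF (S →₀ ℕ))
        = MonoidAlgebra.single (FreeMonoid.of β) (1:ℚ)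
            * MonoidAlgebra.single (FreeMonoid.ofList s') (1:ℚ) := by
      rw [MonoidAlgebra.single_mul_single, one_mul]
      rfl
    have hD : DeltaNCF S (MonoidAlgebra.single (FreeMonoid.of β) (1:ℚ))
        = ∑ p ∈ Finset.HasAntidiagonal.antidiagonal β.1, Xel p.1 ⊗ₜ[ℚ] Xel p.2 := by
      rw [DeltaNCF, MonoidAlgebra.lift_single, one_smul]
      exact FreeMonoid.lift_eval_of _ _
    have hG : ∀ p q : S →₀ ℕ,
        pairT (qres u p) (qres w q) (DeltaNCF S (MonoidAlgebra.single
            (FreeMonoid.ofList s') (1:ℚ)))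
          = (pk u p).elim 0 (fun u' => (pk w q).elim 0 (fun w' => qsh u' w' s')) := by
      intro p q
      rw [qres, qres]
      cases hu : pk u p with
      | none => rw [Option.elim_none, Option.elim_none]; exact pairT_zero_left _ _
      | some u' =>
        rw [Option.elim_some, Option.elim_some]
        cases hw : pk w q with
        | none => rw [Option.elim_none, Option.elim_none]; exact pairT_zero_right _ _
        | some w' =>
          rw [Option.elim_some, Option.elim_some]
          exact ih u' w'
    have h1 : pairT (Finsupp.single u (1:ℚ)) (Finsupp.single w (1:ℚ))
        (DeltaNCF S (MonoidAlgebra.single (FreeMonoid.ofList (β :: s')) (1:ℚ)))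
        = ∑ p ∈ Finset.HasAntidiagonal.antidiagonal β.1,
            (pk u p.1).elim 0 (fun u' => (pk w p.2).elim 0 (fun w' => qsh u' w' s')) := by
      rw [hsplit, map_mul, hD, Finset.sum_mul, map_sum]
      exact Finset.sum_congr rfl fun p _ => (pairT_Xel_mul u w p.1 p.2 _).trans (hG p.1 p.2)
    rw [h1]
    match u, w with
    | [], [] =>
      simp only [qsh]
      rw [Finsupp.single_apply, if_neg (by simp)]
      apply Finset.sum_eq_zero
      intro p hp
      rw [Finset.HasAntidiagonal.mem_antidiagonal] at hp
      by_cases hp1 : p.1 = 0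
      · have hp2 : p.2 = β.1 := by rw [hp1, zero_add] at hp; exact hp
        have hp2ne : p.2 ≠ 0 := by rw [hp2]; exact β.2
        simp only [hp1, pk_zero, Option.elim_some, pk_nil _ hp2ne, Option.elim_none]
      · simp only [pk_nil _ hp1, Option.elim_none]
    | [], d :: w2 =>
      simp only [qsh]
      rw [Finsupp.single_apply]
      rw [sum_one (Finset.HasAntidiagonal.antidiagonal β.1) _ ((0 : S →₀ ℕ), β.1)]
      · rw [if_pos (Finset.HasAntidiagonal.mem_antidiagonal.mpr (zero_add β.1))]
        dsimp only
        simp only [pk_zero, Option.elim_some, pk_cons d w2 β.1 β.2]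
        by_cases hd : d.1 = β.1
        · rw [if_pos hd, Option.elim_some]
          simp only [qsh]
          rw [Finsupp.single_apply]
          by_cases hw2 : w2 = s'
          · rw [if_pos hw2, if_pos (by rw [Subtype.ext hd, hw2])]
          · rw [if_neg hw2, if_neg]
            intro hh
            injection hh with _ hh2
            exact hw2 hh2
        · rw [if_neg hd, Option.elim_none, if_neg]
          intro hh
          injection hh with hh1 _
          exact hd (congrArg Subtype.val hh1)
      · intro p hp hne
        rw [Finset.HasAntidiagonal.mem_antidiagonal] at hp
        by_cases hp1 : p.1 = 0
        · exfalso
          have hp2 : p.2 = β.1 := by rw [hp1, zero_add] at hp; exact hp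
          exact hne (Prod.ext_iff.mpr ⟨hp1, hp2⟩)
        · simp only [pk_nil _ hp1, Option.elim_none]
    | c :: u2, [] =>
      simp only [qsh]
      rw [Finsupp.single_apply]
      rw [sum_one (Finset.HasAntidiagonal.antidiagonal β.1) _ (β.1, (0 : S →₀ ℕ))]
      · rw [if_pos (Finset.HasAntidiagonal.mem_antidiagonal.mpr (add_zero β.1))]
        dsimp only
        simp only [pk_zero, Option.elim_some, pk_cons c u2 β.1 β.2]
        by_cases hc : c.1 = β.1
        · rw [if_pos hc, Option.elim_some, qsh_nil_right]
          rw [Finsupp.single_apply]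
          by_cases hu2 : u2 = s'
          · rw [if_pos hu2, if_pos (by rw [Subtype.ext hc, hu2])]
          · rw [if_neg hu2, if_neg]
            intro hh
            injection hh with _ hh2
            exact hu2 hh2
        · rw [if_neg hc, Option.elim_none, if_neg]
          intro hh
          injection hh with hh1 _
          exact hc (congrArg Subtype.val hh1)
      · intro p hp hne
        rw [Finset.HasAntidiagonal.mem_antidiagonal] at hp
        by_cases hp2 : p.2 = 0
        · exfalso
          have hp1 : p.1 = β.1 := by rw [hp2, add_zero] at hp; exact hp
          exact hne (Prod.ext_iff.mpr ⟨hp1, hp2⟩)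
        · by_cases hp1 : p.1 = 0
          · simp only [hp1, pk_zero, Option.elim_some, pk_nil _ hp2, Option.elim_none]
          · simp only [pk_cons c u2 p.1 hp1]
            by_cases hcp : c.1 = p.1
            · rw [if_pos hcp]
              simp only [Option.elim_some, pk_nil _ hp2, Option.elim_none]
            · rw [if_neg hcp, Option.elim_none]
    | c :: u2, d :: w2 =>
      simp only [qsh]
      rw [Finsupp.add_apply, Finsupp.add_apply, mapDomain_cons_apply,
        mapDomain_cons_apply, mapDomain_cons_apply]
      rw [sum_three (Finset.HasAntidiagonal.antidiagonal β.1) _ (β.1, (0 : S →₀ ℕ)) ((0 : S →₀ ℕ), β.1)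
        (c.1, d.1)
        (fun h => β.2 (congrArg Prod.fst h))
        (fun h => d.2 (congrArg Prod.snd h).symm)
        (fun h => c.2 (congrArg Prod.fst h).symm)]
      · dsimp only
        congr 1
        · congr 1
          · rw [if_pos (Finset.HasAntidiagonal.mem_antidiagonal.mpr (add_zero β.1))]
            simp only [pk_cons c u2 β.1 β.2, pk_zero]
            by_cases hc : c.1 = β.1
            · rw [if_pos hc, Option.elim_some, Option.elim_some, if_pos (Subtype.ext hc)]
            · rw [if_neg hc, Option.elim_none,
                if_neg (fun hh => hc (congrArg Subtype.val hh))]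
          · rw [if_pos (Finset.HasAntidiagonal.mem_antidiagonal.mpr (zero_add β.1))]
            simp only [pk_cons d w2 β.1 β.2, pk_zero, Option.elim_some]
            by_cases hd : d.1 = β.1
            · rw [if_pos hd, Option.elim_some, if_pos (Subtype.ext hd)]
            · rw [if_neg hd, Option.elim_none,
                if_neg (fun hh => hd (congrArg Subtype.val hh))]
        · by_cases hcd : c.1 + d.1 = β.1
          · rw [if_pos (Finset.HasAntidiagonal.mem_antidiagonal.mpr hcd), if_pos (Subtype.ext hcd)]
            simp [pk_cons c u2 c.1 c.2, pk_cons d w2 d.1 d.2]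
          · rw [if_neg (fun hh => hcd (Finset.HasAntidiagonal.mem_antidiagonal.mp hh)),
              if_neg (fun hh => hcd (congrArg Subtype.val hh))]
      · intro p hp h1 h2 h3
        rw [Finset.HasAntidiagonal.mem_antidiagonal] at hp
        by_cases hp1 : p.1 = 0
        · exfalso
          have hp2 : p.2 = β.1 := by rw [hp1, zero_add] at hp; exact hp
          exact h2 (Prod.ext_iff.mpr ⟨hp1, hp2⟩)
        · simp only [pk_cons c u2 p.1 hp1]
          by_cases hcp : c.1 = p.1
          · rw [if_pos hcp, Option.elim_some]
            by_cases hp2 : p.2 = 0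
            · exfalso
              have hq : p.1 = β.1 := by rw [hp2, add_zero] at hp; exact hp
              exact h1 (Prod.ext_iff.mpr ⟨hq, hp2⟩)
            · simp only [pk_cons d w2 p.2 hp2]
              by_cases hdp : d.1 = p.2
              · exfalso
                exact h3 (Prod.ext_iff.mpr ⟨hcp.symm, hdp.symm⟩)
              · rw [if_neg hdp, Option.elim_none]
          · rw [if_neg hcp, Option.elim_none]

/-- The pairing between `QSym_M` and `NC_M` (for `M = ℕ^{⊕S}`)
satisfies `⟨a ⊗ b, Δ(v)⟩ = ⟨ab, v⟩`, where `ab` is the quasi-shuffle product. -/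
theorem pairing_mul_comul (a b : QS (S →₀ ℕ)) (v : NCF (S →₀ ℕ)) :
    pairT a b (DeltaNCF S v) = pairing (qmul a b) v := by
  classical
  induction v using MonoidAlgebra.induction_linear with
  | zero => rw [map_zero, map_zero, pairing_zero_right]
  | add f g hf hg => rw [map_add, map_add, hf, hg, pairing_add_right]
  | single g r =>
    have hgr : (MonoidAlgebra.single g r : NCF (S →₀ ℕ))
        = r • MonoidAlgebra.single g (1:ℚ) := by
      rw [MonoidAlgebra.smul_single, smul_eq_mul, mul_one]
    rw [hgr, map_smul, map_smul, pairing_smul_right, smul_eq_mul]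
    congr 1
    rw [show g = FreeMonoid.ofList (FreeMonoid.toList g) from
      (FreeMonoid.ofList_toList g).symm]
    rw [show (MonoidAlgebra.single (FreeMonoid.ofList (FreeMonoid.toList g)) (1:ℚ) : NCF (S →₀ ℕ))
        = MonoidAlgebra.single (FreeMonoid.ofList (FreeMonoid.toList g)) (1:ℚ) from rfl]
    rw [pairing_single_right]
    induction a using Finsupp.induction_linear with
    | zero => rw [pairT_zero_left, qmul_zero_left, Finsupp.zero_apply]
    | add a1 a2 h1 h2 => rw [pairT_add_left, h1, h2, qmul_add_left, Finsupp.add_apply]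
    | single u r' =>
      have hu : (Finsupp.single u r' : QS (S →₀ ℕ)) = r' • Finsupp.single u (1:ℚ) := by
        rw [Finsupp.smul_single, smul_eq_mul, mul_one]
      rw [hu, pairT_smul_left, qmul_smul_left, Finsupp.smul_apply, smul_eq_mul]
      congr 1
      induction b using Finsupp.induction_linear with
      | zero => rw [pairT_zero_right, qmul_zero_right, Finsupp.zero_apply]
      | add b1 b2 h1 h2 => rw [pairT_add_right, h1, h2, qmul_add_right, Finsupp.add_apply]
      | single w r'' =>
        have hw : (Finsupp.single w r'' : QS (S →₀ ℕ)) = r'' • Finsupp.single w (1:ℚ) := by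
          rw [Finsupp.smul_single, smul_eq_mul, mul_one]
        rw [hw, pairT_smul_right, qmul_smul_right, Finsupp.smul_apply, smul_eq_mul]
        congr 1
        rw [qmul_single_single, one_mul, one_smul]
        exact key_lemma S (FreeMonoid.toList g) u w

end QSym
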